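/- There exists R₀ > 1 such that for all R > R₀ the following holds: for every w ∈ K⁻, writing H⁻ⁿ(w) = (xₙ,yₙ,zₙ) and Nₙ = max{R, |xₙ|, (1+δ)|yₙ|^{1/2}}, the sequence (Nₙ) is non-increasing, i.e. Nₙ₊₁ ≤ Nₙ for all n ≥ 0. -/

import Mathlib

open Complex Filter Topology

/-- The quadratic automorphism `H(x,y,z) = (xy + az, x² + by, x)` of `ℂ³`. -/
noncomputable def H (a b : ℂ) (w : ℂ × ℂ × ℂ) : ℂ × ℂ × ℂ :=
  (w.1 * w.2.1 + a * w.2.2, w.1 ^ 2 + b * w.2.1, w.1)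

/-- The inverse automorphism
`H⁻¹(x,y,z) = (z, (y − z²)/b, (x − z(y − z²)/b)/a)`. -/
noncomputable def Hinv (a b : ℂ) (w : ℂ × ℂ × ℂ) : ℂ × ℂ × ℂ :=
  (w.2.2, (w.2.1 - w.2.2 ^ 2) / b,
    (w.1 - w.2.2 * ((w.2.1 - w.2.2 ^ 2) / b)) / a)

/-- `V⁺ = {(x,y,z) : |z| > max{R, |x|, (1+δ)|y|^{1/2}}}`. -/
def Vplus (δ R : ℝ) : Set (ℂ × ℂ × ℂ) :=
  {w | ‖w.2.2‖ >
    max R (max (‖w.1‖) ((1 + δ) * Real.sqrt (‖w.2.1‖)))}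

/-- `U⁻ = ⋃_{n≥0} Hⁿ(V⁺)`. -/
noncomputable def Uminus (a b : ℂ) (δ R : ℝ) : Set (ℂ × ℂ × ℂ) :=
  ⋃ n : ℕ, (H a b)^[n] '' Vplus δ R

/-- `K⁻ = ℂ³ \ U⁻`. -/
noncomputable def Kminus (a b : ℂ) (δ R : ℝ) : Set (ℂ × ℂ × ℂ) :=
  (Uminus a b δ R)ᶜ

/-- `Nₙ = max{R, |xₙ|, (1+δ)|yₙ|^{1/2}}` where `H⁻ⁿ(w) = (xₙ,yₙ,zₙ)`. -/
noncomputable def Nseq (a b : ℂ) (δ R : ℝ) (w : ℂ × ℂ × ℂ) (n : ℕ) : ℝ :=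
  max R (max (‖((Hinv a b)^[n] w).1‖)
    ((1 + δ) * Real.sqrt (‖((Hinv a b)^[n] w).2.1‖)))

lemma H_Hinv (a b : ℂ) (ha : a ≠ 0) (hb : b ≠ 0) :
    Function.LeftInverse (H a b) (Hinv a b) := by
  intro w
  obtain ⟨x, y, z⟩ := w
  simp only [H, Hinv, Prod.mk.injEq]
  refine ⟨?_, ?_, trivial⟩ <;> (field_simp; try ring)

lemma not_in_Vplus {a b : ℂ} (ha : a ≠ 0) (hb : b ≠ 0) {δ R : ℝ}
    {w : ℂ × ℂ × ℂ} (hw : w ∈ Kminus a b δ R) (n : ℕ) :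
    ‖((Hinv a b)^[n] w).2.2‖ ≤ Nseq a b δ R w n := by
  by_contra h
  push_neg at h
  exact hw (Set.mem_iUnion.mpr ⟨n, ⟨(Hinv a b)^[n] w, h,
    (H_Hinv a b ha hb).iterate n w⟩⟩)

set_option maxHeartbeats 1000000 in
/-- there exists `R₀ > 1` such that for all `R > R₀`: for every
`w ∈ K⁻` the sequence `Nₙ` is non-increasing. -/
theorem stmt4 (a b : ℂ) (ha : a ≠ 0) (hb : b ≠ 0) (δ : ℝ) (hδ : 0 < δ)
    (hbδ : ‖b‖ = 1 + δ) :
    ∃ R₀ > (1 : ℝ), ∀ R > R₀, ∀ w ∈ Kminus a b δ R, ∀ n : ℕ,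
      Nseq a b δ R w (n + 1) ≤ Nseq a b δ R w n := by
  have hA0 : (0:ℝ) < ‖a‖ := norm_pos_iff.mpr ha
  refine ⟨1 + (1+δ)^6 * (1 + ‖a‖)^2 / δ, ?_, ?_⟩
  · have : 0 < (1+δ)^6 * (1 + ‖a‖)^2 / δ := by positivity
    linarith
  intro R hR w hw n
  have hR1 : (1:ℝ) < R := by
    have : 0 < (1+δ)^6 * (1 + ‖a‖)^2 / δ := by positivity
    linarith
  by_contra hcon
  push_neg at hcon
  have hz := not_in_Vplus ha hb hw n
  have hz' := not_in_Vplus ha hb hw (n+1)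
  set x := ((Hinv a b)^[n] w).1 with hxd
  set y := ((Hinv a b)^[n] w).2.1 with hyd
  set z := ((Hinv a b)^[n] w).2.2 with hzd
  have hstep : (Hinv a b)^[n+1] w = (z, (y - z^2)/b, (x - z*((y - z^2)/b))/a) := by
    rw [Function.iterate_succ_apply']
    rfl
  have hNn : Nseq a b δ R w n
      = max R (max (‖x‖) ((1+δ) * Real.sqrt (‖y‖))) := rfl
  set s := Real.sqrt (‖(y - z^2)/b‖) with hsd
  have hNn1 : Nseq a b δ R w (n+1)
      = max R (max (‖z‖) ((1+δ) * s)) := by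
    rw [Nseq, hstep]
  have hRN : R ≤ Nseq a b δ R w n := by rw [hNn]; exact le_max_left _ _
  have hxN : ‖x‖ ≤ Nseq a b δ R w n := by
    rw [hNn]; exact le_max_of_le_right (le_max_left _ _)
  have h1 : Nseq a b δ R w (n+1) ≤ max (Nseq a b δ R w n) ((1+δ)*s) := by
    rw [hNn1]
    exact max_le (le_trans hRN (le_max_left _ _))
      (max_le (le_trans hz (le_max_left _ _)) (le_max_right _ _))
  have hNT : Nseq a b δ R w n < (1+δ)*s := by
    have h2 := lt_of_lt_of_le hcon h1
    rcases lt_max_iff.mp h2 with h | h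
    · exact absurd h (lt_irrefl _)
    · exact h
  have hT : Nseq a b δ R w (n+1) ≤ (1+δ)*s :=
    h1.trans (max_le hNT.le le_rfl)
  have hsnn : 0 ≤ s := Real.sqrt_nonneg _
  have hs0 : 0 < s := by nlinarith [hNT, hRN, hR1, hδ]
  have hs2 : s^2 = ‖(y - z^2)/b‖ := Real.sq_sqrt (norm_nonneg _)
  have hbpos : (0:ℝ) < 1 + δ := by linarith
  have hy' : ‖y - z^2‖ = (1+δ) * s^2 := by
    have : ‖(y - z^2)/b‖ = ‖y - z^2‖ / (1+δ) := by
      rw [norm_div, hbδ]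
    rw [hs2, this]
    field_simp
  -- the constraint at step n+1
  rw [hstep] at hz'
  have hnum : ‖x - z*((y - z^2)/b)‖ ≤ ((1+δ)*s) * ‖a‖ := by
    have h3 : ‖(x - z*((y - z^2)/b))/a‖
        = ‖x - z*((y - z^2)/b)‖ / ‖a‖ := norm_div _ _
    have h4 := hz'.trans hT
    rw [h3, div_le_iff₀ hA0] at h4
    exact h4
  have hzy : ‖z‖ * ‖(y - z^2)/b‖
      ≤ ‖x‖ + ‖x - z*((y - z^2)/b)‖ := by
    calc ‖z‖ * ‖(y - z^2)/b‖
        = ‖z * ((y - z^2)/b)‖ := (norm_mul _ _).symm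
      _ = ‖x - (x - z*((y - z^2)/b))‖ := by congr 1; ring
      _ ≤ ‖x‖ + ‖x - z*((y - z^2)/b)‖ := by
          have := norm_sub_le x (x - z*((y - z^2)/b))
          exact this
  have hzs2 : ‖z‖ * s^2 ≤ Nseq a b δ R w n + ((1+δ)*s) * ‖a‖ := by
    rw [hs2]
    exact hzy.trans (add_le_add hxN hnum)
  have hzs : ‖z‖ * s ≤ (1+δ) * (1 + ‖a‖) := by
    nlinarith [hzs2, hNT, hs0, norm_nonneg z]
  -- lower bound on s
  have hsR : R < (1+δ)*s := lt_of_le_of_lt hRN hNT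
  have hR0 : (0:ℝ) < R := lt_trans one_pos hR1
  have e1 : R^4 ≤ ((1+δ)*s)^4 := pow_le_pow_left₀ hR0.le hsR.le 4
  have e3 : R < R^4 := by
    have h5 : (1:ℝ) < R^3 := one_lt_pow₀ hR1 (by norm_num)
    nlinarith [hR0, h5]
  have e2 : (1+δ)^6 * (1 + ‖a‖)^2 < δ * R := by
    have h5 : (1+δ)^6 * (1 + ‖a‖)^2 / δ < R := by linarith
    calc (1+δ)^6 * (1 + ‖a‖)^2
        = ((1+δ)^6 * (1 + ‖a‖)^2 / δ) * δ := by field_simp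
      _ < R * δ := mul_lt_mul_of_pos_right h5 hδ
      _ = δ * R := mul_comm _ _
  have hp4 : (0:ℝ) < (1+δ)^4 := by positivity
  have e4 : (1+δ)^4 * ((1+δ)^2 * (1 + ‖a‖)^2) < (1+δ)^4 * (δ * s^4) := by
    calc (1+δ)^4 * ((1+δ)^2 * (1 + ‖a‖)^2)
        = (1+δ)^6 * (1 + ‖a‖)^2 := by ring
      _ < δ * R := e2
      _ < δ * R^4 := mul_lt_mul_of_pos_left e3 hδ
      _ ≤ δ * ((1+δ)*s)^4 := mul_le_mul_of_nonneg_left e1 hδ.le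
      _ = (1+δ)^4 * (δ * s^4) := by ring
  have h4 : (1+δ)^2 * (1 + ‖a‖)^2 < δ * s^4 := lt_of_mul_lt_mul_left e4 hp4.le
  have hz2 : (‖z‖)^2 * s^2 ≤ ((1+δ) * (1 + ‖a‖))^2 := by
    nlinarith [hzs, mul_nonneg (norm_nonneg z) hsnn]
  have hs2pos : 0 < s^2 := by positivity
  have hzlt : (‖z‖)^2 < δ * s^2 := by
    nlinarith [hz2, h4, hs2pos]
  have htri : (1+δ) * s^2 ≤ ‖y‖ + (‖z‖)^2 := by
    have h6 : ‖y - z^2‖ ≤ ‖y‖ + ‖z^2‖ := by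
      have := norm_sub_le y (z^2)
      exact this
    calc (1+δ) * s^2 = ‖y - z^2‖ := hy'.symm
      _ ≤ ‖y‖ + ‖z^2‖ := h6
      _ = ‖y‖ + (‖z‖)^2 := by rw [norm_pow]
  have hyb : s^2 < ‖y‖ := by nlinarith [htri, hzlt]
  have hsq : s < Real.sqrt (‖y‖) := by
    have h7 := Real.sqrt_lt_sqrt (sq_nonneg s) hyb
    rwa [Real.sqrt_sq hsnn] at h7
  have hfin : (1+δ) * Real.sqrt (‖y‖) ≤ Nseq a b δ R w n := by
    rw [hNn]; exact le_max_of_le_right (le_max_right _ _)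
  have hlast : (1+δ)*s < (1+δ) * Real.sqrt (‖y‖) :=
    mul_lt_mul_of_pos_left hsq hbpos
  linarith [hNT, hfin, hlast]
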